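/- If X=x causes Y=y in (M,u⃗) according to Def 3 (contrastive necessity with actual direct sufficiency), then X=x causes Y=y according to the Original HP definition. -/
import Mathlib


open Classical

/-- A strongly recursive structural-equations (causal) model with exogenous
variables `U`, endogenous variables `V`, and values in `α`.  `rng v` is the
range `R(v)` of an endogenous variable; `F v u s` is the structural equation of
`v` evaluated in context `u` at the assignment `s` (it does not depend on
`s v`); `solve Z g u` is the unique solution of the model obtained by
intervening `Z ← g` in context `u`; `actual u` is the actual world of context
`u`; `prec` is a well-founded order witnessing strong recursivity. -/
structure CausalModel (U V α : Type) where
  rng : V → Set α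
  F : V → U → (V → α) → α
  F_rng : ∀ (v : V) (u : U) (s : V → α), F v u s ∈ rng v
  F_self : ∀ (v : V) (u : U) (s s' : V → α), (∀ w, w ≠ v → s w = s' w) → F v u s = F v u s'
  solve : Set V → (V → α) → U → V → α
  solve_mem : ∀ (Z : Set V) (g : V → α) (u : U), ∀ v ∈ Z, solve Z g u v = g v
  solve_not_mem : ∀ (Z : Set V) (g : V → α) (u : U) (v : V), v ∉ Z →
    solve Z g u v = F v u (solve Z g u)
  solve_unique : ∀ (Z : Set V) (g : V → α) (u : U) (s : V → α),
    (∀ v ∈ Z, s v = g v) → (∀ v ∉ Z, s v = F v u s) → s = solve Z g u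
  actual : U → V → α
  actual_def : ∀ (g : V → α) (u : U), solve ∅ g u = actual u
  prec : V → V → Prop
  prec_wf : WellFounded prec
  prec_dep : ∀ a b : V, (∃ (u : U) (s s' : V → α), (∀ w, s w ∈ rng w) ∧ (∀ w, s' w ∈ rng w) ∧
    (∀ w, w ≠ a → s w = s' w) ∧ F b u s ≠ F b u s') → prec a b

namespace CausalModel

variable {U V α : Type}

/-- The assignment that is `x` on `X` and `g` elsewhere. -/
noncomputable def merge (X : Set V) (x g : V → α) : V → α :=
  fun v => if v ∈ X then x v else g v

/-- `g` is a valid setting: every variable gets a value in its range. -/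
def Setting (M : CausalModel U V α) (g : V → α) : Prop := ∀ v, g v ∈ M.rng v

/-- `X⃗=x⃗` is directly sufficient for `Y⃗=y⃗`: in every context, intervening
`X⃗ ← x⃗` together with arbitrary (in-range) values for all remaining variables
`C⃗ = V ∖ (X⃗ ∪ Y⃗)` yields `Y⃗ = y⃗`. -/
def directlySuff (M : CausalModel U V α) (X : Set V) (x : V → α) (Y : Set V) (y : V → α) : Prop :=
  ∀ g : V → α, M.Setting g → (∀ v ∈ X, g v = x v) →
    ∀ u : U, ∀ v ∈ Y, M.solve (X ∪ (X ∪ Y)ᶜ) g u v = y v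

/-- Actual direct sufficiency: as `directlySuff` but only in the given context `u`. -/
def actDirectlySuff (M : CausalModel U V α) (u : U) (X : Set V) (x : V → α)
    (Y : Set V) (y : V → α) : Prop :=
  ∀ g : V → α, M.Setting g → (∀ v ∈ X, g v = x v) →
    ∀ v ∈ Y, M.solve (X ∪ (X ∪ Y)ᶜ) g u v = y v

/-- `X⃗=x⃗` is weakly sufficient for `Y⃗=y⃗`: in every context, `[X⃗ ← x⃗] Y⃗=y⃗`. -/
def weaklySuff (M : CausalModel U V α) (X : Set V) (x : V → α) (Y : Set V) (y : V → α) : Prop :=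
  ∀ u : U, ∀ v ∈ Y, M.solve X x u v = y v

/-- Actual weak sufficiency in context `u`: `(M,u) ⊨ [X⃗ ← x⃗] Y⃗=y⃗`. -/
def actWeaklySuff (M : CausalModel U V α) (u : U) (X : Set V) (x : V → α)
    (Y : Set V) (y : V → α) : Prop :=
  ∀ v ∈ Y, M.solve X x u v = y v

/-- `X⃗=x⃗` is strongly sufficient for `Y⃗=y⃗`: it is directly sufficient for some
superset `N⃗ ⊇ Y⃗` with values extending `y⃗`. -/
def stronglySuff (M : CausalModel U V α) (X : Set V) (x : V → α) (Y : Set V) (y : V → α) : Prop :=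
  ∃ (N : Set V) (n : V → α), Y ⊆ N ∧ (∀ v ∈ Y, n v = y v) ∧ M.directlySuff X x N n

/-- Actual strong sufficiency of `X⃗=x⃗` for the single effect `Y0 = y` along the
network `N` in context `u`. -/
def actStronglySuffNet (M : CausalModel U V α) (u : U) (X : Set V) (x : V → α)
    (Y0 : V) (y : α) (N : Set V) : Prop :=
  ∃ n : V → α, Y0 ∈ N ∧ n Y0 = y ∧ M.actDirectlySuff u X x N n

/-- `a` is a parent of `b`: the equation of `b` depends on the value of `a`. -/
def IsParent (M : CausalModel U V α) (a b : V) : Prop :=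
  ∃ (u : U) (s s' : V → α), M.Setting s ∧ M.Setting s' ∧
    (∀ w, w ≠ a → s w = s' w) ∧ M.F b u s ≠ M.F b u s'

/-- `a` is only a parent of `b`: the single edge `a → b` is the only directed
path from `a` to `b`. -/
def OnlyParent (M : CausalModel U V α) (a b : V) : Prop :=
  M.IsParent a b ∧ ¬ ∃ z, M.IsParent a z ∧ Relation.TransGen M.IsParent z b

/-- `R` is the set of root variables: equations of members of `R` depend only on
the context, and equations of all other variables do not depend on the context
(exogenous variables appear only in equations of the form `V = U`). -/
def IsRootSet (M : CausalModel U V α) (R : Set V) : Prop :=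
  (∀ v ∈ R, ∀ (u : U) (s s' : V → α), M.F v u s = M.F v u s') ∧
  (∀ v ∉ R, ∀ (u u' : U) (s : V → α), M.F v u s = M.F v u' s)

/-- Def 2: contrastive necessity with actual strong sufficiency (AC1, AC2, AC3). -/
def CauseDef2 (M : CausalModel U V α) (u : U) (X : Set V) (x : V → α) (Y0 : V) (y : α) : Prop :=
  (∀ v ∈ X, M.actual u v = x v) ∧ M.actual u Y0 = y ∧
  (∃ (W N : Set V) (x' : V → α), Disjoint W (X ∪ {Y0}) ∧ (∀ v ∈ X, x' v ∈ M.rng v) ∧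
      M.actStronglySuffNet u (X ∪ W) (merge X x (M.actual u)) Y0 y N ∧
      ∀ S ⊆ N, ¬ M.actStronglySuffNet u (X ∪ W) (merge X x' (M.actual u)) Y0 y S) ∧
  (∀ X' ⊂ X, ¬ ∃ (W N : Set V) (x' : V → α), Disjoint W (X' ∪ {Y0}) ∧
      (∀ v ∈ X', x' v ∈ M.rng v) ∧
      M.actStronglySuffNet u (X' ∪ W) (merge X' x (M.actual u)) Y0 y N ∧
      ∀ S ⊆ N, ¬ M.actStronglySuffNet u (X' ∪ W) (merge X' x' (M.actual u)) Y0 y S)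

/-- Def 3: contrastive necessity with actual direct sufficiency (AC1, AC2, AC3). -/
def CauseDef3 (M : CausalModel U V α) (u : U) (X : Set V) (x : V → α) (Y0 : V) (y : α) : Prop :=
  (∀ v ∈ X, M.actual u v = x v) ∧ M.actual u Y0 = y ∧
  (∃ (W : Set V) (x' : V → α), Disjoint W (X ∪ {Y0}) ∧ (∀ v ∈ X, x' v ∈ M.rng v) ∧
      M.actDirectlySuff u (X ∪ W) (merge X x (M.actual u)) {Y0} (fun _ => y) ∧
      ¬ M.actDirectlySuff u (X ∪ W) (merge X x' (M.actual u)) {Y0} (fun _ => y)) ∧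
  (∀ X' ⊂ X, ¬ ∃ (W : Set V) (x' : V → α), Disjoint W (X' ∪ {Y0}) ∧
      (∀ v ∈ X', x' v ∈ M.rng v) ∧
      M.actDirectlySuff u (X' ∪ W) (merge X' x (M.actual u)) {Y0} (fun _ => y) ∧
      ¬ M.actDirectlySuff u (X' ∪ W) (merge X' x' (M.actual u)) {Y0} (fun _ => y))

/-- Def 4 (singleton cause): contrastive necessity with non-actual weak sufficiency. -/
def CauseDef4 (M : CausalModel U V α) (u : U) (X0 : V) (x0 : α) (Y0 : V) (y : α) : Prop :=
  M.actual u X0 = x0 ∧ M.actual u Y0 = y ∧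
  ∃ (W : Set V) (x' : α), Disjoint W ({X0} ∪ {Y0} : Set V) ∧ x' ∈ M.rng X0 ∧
    M.weaklySuff ({X0} ∪ W) (merge {X0} (fun _ => x0) (M.actual u)) {Y0} (fun _ => y) ∧
    ¬ M.weaklySuff ({X0} ∪ W) (merge {X0} (fun _ => x') (M.actual u)) {Y0} (fun _ => y)

/-- Def 8 (singleton cause): minimal necessity with actual strong sufficiency
(minimality AC3 is automatic for singletons). -/
def CauseDef8 (M : CausalModel U V α) (u : U) (X0 : V) (x0 : α) (Y0 : V) (y : α) : Prop :=
  M.actual u X0 = x0 ∧ M.actual u Y0 = y ∧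
  ∃ W N : Set V, Disjoint W ({X0} ∪ {Y0} : Set V) ∧
    M.actStronglySuffNet u ({X0} ∪ W) (merge {X0} (fun _ => x0) (M.actual u)) Y0 y N ∧
    ∀ S ⊆ N, ¬ M.actStronglySuffNet u W (M.actual u) Y0 y S

/-- Def 10 (singleton cause): minimal necessity with non-actual weak sufficiency. -/
def CauseDef10 (M : CausalModel U V α) (u : U) (X0 : V) (x0 : α) (Y0 : V) (y : α) : Prop :=
  M.actual u X0 = x0 ∧ M.actual u Y0 = y ∧
  ∃ W : Set V, Disjoint W ({X0} ∪ {Y0} : Set V) ∧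
    M.weaklySuff ({X0} ∪ W) (merge {X0} (fun _ => x0) (M.actual u)) {Y0} (fun _ => y) ∧
    ¬ M.weaklySuff W (M.actual u) {Y0} (fun _ => y)

end CausalModel

namespace CausalModel

/-- The Original HP definition for a singleton cause `X0 = x0` of `Y0 = y`:
AC1, and AC2 with a partition of `V` into `Z⃗ = W⃗'ᶜ ∋ X0, Y0` and `W⃗'`, and
settings `x'`, `w⃗'`: AC2(a): `(M,u) ⊨ [X0←x', W⃗'←w⃗'] Y0 ≠ y`; AC2(b): for all
`Y⃗' ⊆ Z⃗ ∖ {X0}`, `(M,u) ⊨ [X0←x0, W⃗'←w⃗', Y⃗'←y⃗'*] Y0 = y`.  (AC3 is automatic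
for singleton causes.) -/
def CauseOHP {U V α : Type} (M : CausalModel U V α) (u : U)
    (X0 : V) (x0 : α) (Y0 : V) (y : α) : Prop :=
  M.actual u X0 = x0 ∧ M.actual u Y0 = y ∧
  ∃ (W' : Set V) (x' : α) (w' : V → α), X0 ∉ W' ∧ Y0 ∉ W' ∧
    x' ∈ M.rng X0 ∧ (∀ v ∈ W', w' v ∈ M.rng v) ∧
    ¬ M.actWeaklySuff u ({X0} ∪ W') (merge {X0} (fun _ => x') w') {Y0} (fun _ => y) ∧
    ∀ Y' ⊆ W'ᶜ \ {X0}, M.actWeaklySuff u ({X0} ∪ W' ∪ Y')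
        (merge {X0} (fun _ => x0) (merge W' w' (M.actual u))) {Y0} (fun _ => y)

/-- `solve` depends on `g` only through its values on `Z`. -/
theorem solve_congr {U V α : Type} (M : CausalModel U V α) (Z : Set V) (g g' : V → α) (u : U)
    (h : ∀ v ∈ Z, g v = g' v) : M.solve Z g u = M.solve Z g' u := by
  apply M.solve_unique
  · intro v hv; rw [M.solve_mem Z g u v hv, h v hv]
  · intro v hv; exact M.solve_not_mem Z g u v hv

/-- The actual world is in range. -/
theorem actual_mem_rng {U V α : Type} (M : CausalModel U V α) (u : U) (v : V) :
    M.actual u v ∈ M.rng v := by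
  rw [← M.actual_def (M.actual u) u, M.solve_not_mem ∅ (M.actual u) u v (by simp)]
  exact M.F_rng v u _

/-- Def 3 (contrastive necessity with actual direct sufficiency)
implies the Original HP definition. -/
theorem def3_implies_originalHP {U V α : Type} (M : CausalModel U V α) (u : U)
    (X0 : V) (x0 : α) (Y0 : V) (y : α) (hne : X0 ≠ Y0)
    (h : CauseDef3 M u {X0} (fun _ => x0) Y0 y) :
    CauseOHP M u X0 x0 Y0 y := by
  obtain ⟨hAC1, hY, ⟨W, x', hdisj, hrng, hsuff, hnsuff⟩, -⟩ := h
  have hX0W : X0 ∉ W := fun hmem =>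
    (hdisj.le_bot ⟨hmem, Or.inl rfl⟩ : X0 ∈ (⊥ : Set V)).elim
  have hY0W : Y0 ∉ W := fun hmem =>
    (hdisj.le_bot ⟨hmem, Or.inr rfl⟩ : Y0 ∈ (⊥ : Set V)).elim
  -- the intervention set in direct sufficiency is {Y0}ᶜ
  have hset : ({X0} ∪ W) ∪ (({X0} ∪ W) ∪ {Y0})ᶜ = ({Y0}ᶜ : Set V) := by
    ext v
    by_cases hv : v = Y0
    · subst hv; simp [hne.symm, hY0W]
    · simp only [Set.mem_union, Set.mem_compl_iff, Set.mem_singleton_iff, hv]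
      tauto
  -- extract the witness assignment g from the failure of direct sufficiency
  unfold actDirectlySuff at hnsuff
  push_neg at hnsuff
  obtain ⟨g, hgset, hgagr, v₀, hv₀, hgne⟩ := hnsuff
  have hv₀' : v₀ = Y0 := hv₀
  rw [hv₀'] at hgne
  rw [hset] at hgne
  have hgX0 : g X0 = x' X0 := by
    have := hgagr X0 (Or.inl rfl); simpa [merge] using this
  have hgW : ∀ v ∈ W, g v = M.actual u v := by
    intro v hv
    have hvne : v ≠ X0 := fun h => hX0W (h ▸ hv)
    have := hgagr v (Or.inr hv); simpa [merge, hvne] using this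
  refine ⟨hAC1 X0 rfl, hY, ({X0, Y0} : Set V)ᶜ, x' X0, g, by simp, by simp,
    hrng X0 rfl, fun v _ => hgset v, ?_, ?_⟩
  · -- AC2(a)
    intro hws
    have hsetW : ({X0} ∪ ({X0, Y0} : Set V)ᶜ) = ({Y0}ᶜ : Set V) := by
      ext v
      by_cases hv : v = Y0
      · subst hv; simp [hne.symm]
      · simp only [Set.mem_union, Set.mem_singleton_iff, Set.mem_compl_iff,
          Set.mem_insert_iff, hv]
        tauto
    have hmerge : merge {X0} (fun _ => x' X0) g = g := by
      funext v
      by_cases hv : v = X0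
      · subst hv; simp [merge, hgX0]
      · simp [merge, hv]
    have := hws Y0 rfl
    rw [hsetW, hmerge] at this
    exact hgne this
  · -- AC2(b)
    intro Y' hY' v hv
    have hv' : v = Y0 := hv
    subst v
    set h := merge {X0} (fun _ => x0) (merge ({X0, Y0} : Set V)ᶜ g (M.actual u)) with hh
    have hhY0 : h Y0 = y := by
      simp only [hh, merge, Set.mem_singleton_iff, hne.symm, if_neg hne.symm,
        Set.mem_compl_iff, Set.mem_insert_iff]
      simp [hY]
    by_cases hY0 : Y0 ∈ Y'
    · rw [M.solve_mem _ _ u Y0 (Or.inr hY0), hhY0]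
    · -- Y' must then be empty
      have hYsub : Y' ⊆ {Y0} := by
        intro z hz
        have := hY' hz
        simp only [Set.mem_diff, Set.mem_compl_iff, compl_compl, Set.mem_insert_iff,
          Set.mem_singleton_iff] at this ⊢
        rcases this with ⟨h1 | h1, h2⟩
        · exact absurd h1 h2
        · exact h1
      have hYempty : Y' = ∅ := by
        ext z; simp only [Set.mem_empty_iff_false, iff_false]
        intro hz; exact hY0 ((hYsub hz) ▸ hz)
      have hsetW : ({X0} ∪ ({X0, Y0} : Set V)ᶜ ∪ Y') = ({Y0}ᶜ : Set V) := by
        rw [hYempty]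
        ext v
        by_cases hv : v = Y0
        · subst hv; simp [hne.symm]
        · simp only [Set.mem_union, Set.mem_singleton_iff, Set.mem_compl_iff,
            Set.mem_insert_iff, Set.mem_empty_iff_false, hv]
          tauto
      -- apply direct sufficiency of (X0 = x0, W = actual) to h
      have hhset : M.Setting h := by
        intro v
        simp only [hh, merge]
        split
        · next hv => rw [Set.mem_singleton_iff] at hv
                     have := hAC1 X0 rfl
                     simp only at this
                     rw [hv, ← this]; exact M.actual_mem_rng u X0
        · split
          · exact hgset v
          · exact M.actual_mem_rng u v
      have hhagr : ∀ v ∈ ({X0} ∪ W : Set V), h v = merge {X0} (fun _ => x0) (M.actual u) v := by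
        intro v hv
        rcases hv with hv | hv
        · rw [Set.mem_singleton_iff] at hv; subst hv; simp [hh, merge]
        · have hvX : v ≠ X0 := fun h => hX0W (h ▸ hv)
          have hvY : v ≠ Y0 := fun h => hY0W (h ▸ hv)
          simp only [hh, merge, Set.mem_singleton_iff, if_neg hvX, Set.mem_compl_iff,
            Set.mem_insert_iff]
          rw [if_pos (by tauto), hgW v hv]
      have := hsuff h hhset hhagr Y0 rfl
      rw [hset] at this
      rw [hsetW]
      exact this

end CausalModel
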